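/- Let f : I → ℝ be a C² function on a compact interval I, let k > 0 and ε > 0, and set J = [inf_I f, sup_I f]. Suppose inf_{x∈I} |f'(x)| · λ(I) ≥ k and sup_{x∈I} |f''(x)| · λ(I) ≤ ε · inf_{x∈I} |f'(x)|. Then λ(J) ≥ k and for every subinterval J̃ ⊆ J one has |λ(I ∩ f⁻¹(J̃))/λ(I) − λ(J̃)/λ(J)| ≤ ε · λ(J̃)/λ(J). -/

import Mathlib

open MeasureTheory Set

lemma uniform_stretch_core
    (a b : ℝ) (hab : a < b) (f : ℝ → ℝ)
    (hf : ContDiffOn ℝ 2 f (Icc a b))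
    (k ε : ℝ) (hk : 0 < k) (hε : 0 < ε)
    (m M : ℝ)
    (hm : ∀ x ∈ Icc a b, m ≤ |deriv f x|)
    (hMb : ∀ x ∈ Ioo a b, |deriv (deriv f) x| ≤ M)
    (h1 : k ≤ m * (b - a)) (h2 : M * (b - a) ≤ ε * m)
    (hpos : ∀ x ∈ Ioo a b, 0 < deriv f x) :
    k ≤ f b - f a ∧
      ∀ c d : ℝ, f a ≤ c → c ≤ d → d ≤ f b →
        |(volume (Icc a b ∩ f ⁻¹' Icc c d)).toReal / (b - a)
            - (d - c) / (f b - f a)|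
          ≤ ε * ((d - c) / (f b - f a)) := by
  have hba : 0 < b - a := sub_pos.mpr hab
  have hm0 : 0 < m := by nlinarith
  have hcont : ContinuousOn f (Icc a b) := hf.continuousOn
  have hderiv1 : ContDiffOn ℝ 1 (deriv f) (Ioo a b) :=
    ContDiffOn.deriv_of_isOpen (m := 1) (hf.mono Ioo_subset_Icc_self) isOpen_Ioo (by norm_num)
  have hdiff : DifferentiableOn ℝ f (Ioo a b) :=
    (hf.mono Ioo_subset_Icc_self).differentiableOn (by norm_num)
  obtain ⟨η, hη, hηeq⟩ := exists_deriv_eq_slope f hab hcont hdiff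
  have hq0 : 0 < deriv f η := hpos η hη
  have hqm : m ≤ deriv f η := by
    have := hm η (Ioo_subset_Icc_self hη)
    rwa [abs_of_pos hq0] at this
  have hDba : f b - f a = deriv f η * (b - a) := by
    rw [hηeq, div_mul_cancel₀ _ (sub_ne_zero_of_ne hab.ne')]
  have hD : k ≤ f b - f a := by rw [hDba]; nlinarith
  have hD0 : 0 < f b - f a := lt_of_lt_of_le hk hD
  refine ⟨hD, ?_⟩
  intro c d hc hcd hd
  have hmono : StrictMonoOn f (Icc a b) :=
    strictMonoOn_of_deriv_pos (convex_Icc a b) hcont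
      (fun x hx => hpos x (by rwa [interior_Icc] at hx))
  obtain ⟨x₁, hx₁I, hx₁⟩ := intermediate_value_Icc hab.le hcont ⟨hc, le_trans hcd hd⟩
  obtain ⟨x₂, hx₂I, hx₂⟩ := intermediate_value_Icc hab.le hcont ⟨le_trans hc hcd, hd⟩
  have hx12 : x₁ ≤ x₂ := by
    by_contra h
    push_neg at h
    have := hmono hx₂I hx₁I h
    rw [hx₁, hx₂] at this
    linarith
  have hset : Icc a b ∩ f ⁻¹' Icc c d = Icc x₁ x₂ := by
    ext x
    simp only [mem_inter_iff, mem_preimage, mem_Icc]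
    constructor
    · rintro ⟨⟨hax, hxb⟩, hcf, hfd⟩
      constructor
      · by_contra h
        push_neg at h
        have := hmono ⟨hax, hxb⟩ hx₁I h
        rw [hx₁] at this
        linarith
      · by_contra h
        push_neg at h
        have := hmono hx₂I ⟨hax, hxb⟩ h
        rw [hx₂] at this
        linarith
    · rintro ⟨h1x, h2x⟩
      have hxI : x ∈ Icc a b := ⟨le_trans hx₁I.1 h1x, le_trans h2x hx₂I.2⟩
      refine ⟨⟨hxI.1, hxI.2⟩, ?_, ?_⟩
      · rw [← hx₁]; exact hmono.monotoneOn hx₁I hxI h1x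
      · rw [← hx₂]; exact hmono.monotoneOn hxI hx₂I h2x
  have hvol : (volume (Icc a b ∩ f ⁻¹' Icc c d)).toReal = x₂ - x₁ := by
    rw [hset, Real.volume_Icc, ENNReal.toReal_ofReal (by linarith)]
  rcases eq_or_lt_of_le hx12 with heq | hlt
  · have hcd' : c = d := by rw [← hx₁, ← hx₂, heq]
    rw [hvol, ← heq, hcd']
    simp
  · obtain ⟨ξ, hξ, hξeq⟩ := exists_deriv_eq_slope f hlt
      (hcont.mono (Icc_subset_Icc hx₁I.1 hx₂I.2))
      (hdiff.mono (Ioo_subset_Ioo hx₁I.1 hx₂I.2))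
    have hξI : ξ ∈ Ioo a b := Ioo_subset_Ioo hx₁I.1 hx₂I.2 hξ
    have hp0 : 0 < deriv f ξ := hpos ξ hξI
    have hpm : m ≤ deriv f ξ := by
      have := hm ξ (Ioo_subset_Icc_self hξI)
      rwa [abs_of_pos hp0] at this
    have hdc : d - c = deriv f ξ * (x₂ - x₁) := by
      rw [hξeq, hx₁, hx₂, div_mul_cancel₀ _ (sub_ne_zero_of_ne hlt.ne')]
    have hstep : ∀ u v : ℝ, u ∈ Ioo a b → v ∈ Ioo a b → u < v →
        |deriv f v - deriv f u| ≤ M * (b - a) := by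
      intro u v hu hv huv
      have hsub : Icc u v ⊆ Ioo a b :=
        fun x hx => ⟨lt_of_lt_of_le hu.1 hx.1, lt_of_le_of_lt hx.2 hv.2⟩
      obtain ⟨ζ, hζ, hζeq⟩ := exists_deriv_eq_slope (deriv f) huv
        (hderiv1.continuousOn.mono hsub)
        ((hderiv1.differentiableOn one_ne_zero).mono
          (fun x hx => hsub ⟨hx.1.le, hx.2.le⟩))
      have hζI : ζ ∈ Ioo a b := hsub ⟨hζ.1.le, hζ.2.le⟩
      have hb1 : |deriv (deriv f) ζ| ≤ M := hMb ζ hζI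
      have he : deriv f v - deriv f u = deriv (deriv f) ζ * (v - u) := by
        rw [hζeq, div_mul_cancel₀ _ (sub_ne_zero_of_ne huv.ne')]
      rw [he, abs_mul, abs_of_pos (by linarith : (0:ℝ) < v - u)]
      have hvu : v - u ≤ b - a := by
        have := hu.1; have := hv.2; linarith
      nlinarith [abs_nonneg (deriv (deriv f) ζ)]
    have hMnn : 0 ≤ M := le_trans (abs_nonneg _) (hMb η hη)
    have hkey : |deriv f η - deriv f ξ| ≤ ε * m := by
      rcases lt_trichotomy ξ η with h | h | h
      · have := hstep ξ η hξI hη h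
        linarith
      · rw [h, sub_self, abs_zero]; positivity
      · have := hstep η ξ hη hξI h
        rw [abs_sub_comm] at this
        linarith
    rw [hvol]
    have hP : 0 < x₂ - x₁ := sub_pos.mpr hlt
    have e1 : (d - c) / (f b - f a)
        = deriv f ξ * (x₂ - x₁) / (deriv f η * (b - a)) := by
      rw [hdc, hDba]
    rw [e1]
    have e2 : (x₂ - x₁) / (b - a) - deriv f ξ * (x₂ - x₁) / (deriv f η * (b - a))
        = (x₂ - x₁) * (deriv f η - deriv f ξ) / (deriv f η * (b - a)) := by
      field_simp
    rw [e2, abs_div, abs_mul, abs_of_nonneg hP.le, abs_of_pos (mul_pos hq0 hba)]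
    rw [div_le_iff₀ (mul_pos hq0 hba)]
    have e3 : ε * (deriv f ξ * (x₂ - x₁) / (deriv f η * (b - a))) * (deriv f η * (b - a))
        = ε * deriv f ξ * (x₂ - x₁) := by
      field_simp
    rw [e3]
    nlinarith [mul_le_mul_of_nonneg_left hkey hP.le,
      mul_le_mul_of_nonneg_left (mul_le_mul_of_nonneg_left hpm hε.le) hP.le]

theorem uniform_stretch_criterion
    (a b : ℝ) (hab : a < b) (f : ℝ → ℝ)
    (hf : ContDiffOn ℝ 2 f (Icc a b))
    (k ε : ℝ) (hk : 0 < k) (hε : 0 < ε)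
    (m M : ℝ)
    (hm : m = sInf ((fun x => |deriv f x|) '' Icc a b))
    (hM : M = sSup ((fun x => |deriv (deriv f) x|) '' Icc a b))
    (h1 : k ≤ m * (b - a))
    (h2 : M * (b - a) ≤ ε * m)
    (jinf jsup : ℝ)
    (hjinf : jinf = sInf (f '' Icc a b)) (hjsup : jsup = sSup (f '' Icc a b)) :
    k ≤ jsup - jinf ∧
      ∀ c d : ℝ, jinf ≤ c → c ≤ d → d ≤ jsup →
        |(volume (Icc a b ∩ f ⁻¹' Icc c d)).toReal / (b - a)
            - (d - c) / (jsup - jinf)|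
          ≤ ε * ((d - c) / (jsup - jinf)) := by
  have hba : 0 < b - a := sub_pos.mpr hab
  have hm0 : 0 < m := by nlinarith
  have haI : a ∈ Icc a b := left_mem_Icc.mpr hab.le
  have hbI : b ∈ Icc a b := right_mem_Icc.mpr hab.le
  have hmpt : ∀ x ∈ Icc a b, m ≤ |deriv f x| := by
    intro x hx
    rw [hm]
    refine csInf_le ⟨0, ?_⟩ ⟨x, hx, rfl⟩
    rintro y ⟨z, hz, rfl⟩
    positivity
  -- second derivative : pointwise bound on the interior
  have hudo : UniqueDiffOn ℝ (Icc a b) := uniqueDiffOn_Icc hab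
  have hg2cont : ContinuousOn (derivWithin (derivWithin f (Icc a b)) (Icc a b)) (Icc a b) := by
    have h1' : ContDiffOn ℝ 1 (derivWithin f (Icc a b)) (Icc a b) :=
      ContDiffOn.derivWithin (m := 1) hf hudo (by norm_num)
    exact h1'.continuousOn_derivWithin hudo le_rfl
  have hIooeq : ∀ x ∈ Ioo a b,
      deriv (deriv f) x = derivWithin (derivWithin f (Icc a b)) (Icc a b) x := by
    intro x hx
    have hnx : Icc a b ∈ nhds x := Icc_mem_nhds hx.1 hx.2
    rw [derivWithin_of_mem_nhds hnx]
    apply Filter.EventuallyEq.deriv_eq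
    filter_upwards [isOpen_Ioo.mem_nhds hx] with y hy
    exact (derivWithin_of_mem_nhds (Icc_mem_nhds hy.1 hy.2)).symm
  have hMpt : ∀ x ∈ Ioo a b, |deriv (deriv f) x| ≤ M := by
    intro x hx
    rw [hM]
    refine le_csSup ?_ ⟨x, Ioo_subset_Icc_self hx, rfl⟩
    obtain ⟨C, hC⟩ :=
      (isCompact_Icc.image_of_continuousOn hg2cont.abs).bddAbove
    refine ⟨max C (max |deriv (deriv f) a| |deriv (deriv f) b|), ?_⟩
    rintro y ⟨z, hz, rfl⟩
    rcases eq_or_lt_of_le hz.1 with h | h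
    · rw [← h]
      exact le_max_of_le_right (le_max_left _ _)
    rcases eq_or_lt_of_le hz.2 with h' | h'
    · rw [h']
      exact le_max_of_le_right (le_max_right _ _)
    · show |deriv (deriv f) z| ≤ _
      rw [hIooeq z ⟨h, h'⟩]
      exact le_max_of_le_left (hC ⟨z, hz, rfl⟩)
  -- sign of the derivative
  have hne : ∀ x ∈ Icc a b, deriv f x ≠ 0 := by
    intro x hx h
    have := hmpt x hx
    rw [h, abs_zero] at this
    linarith
  have hderiv1 : ContDiffOn ℝ 1 (deriv f) (Ioo a b) :=
    ContDiffOn.deriv_of_isOpen (m := 1) (hf.mono Ioo_subset_Icc_self) isOpen_Ioo (by norm_num)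
  have hx₀ : (a + b) / 2 ∈ Ioo a b := ⟨by linarith, by linarith⟩
  have hsame : ∀ x ∈ Ioo a b, ∀ y ∈ Ioo a b, deriv f x < 0 → 0 < deriv f y → False := by
    intro x hx y hy hxneg hypos
    have hsub : uIcc x y ⊆ Ioo a b := by
      intro z hz
      rw [mem_uIcc] at hz
      rcases hz with ⟨h1', h2'⟩ | ⟨h1', h2'⟩
      · exact ⟨lt_of_lt_of_le hx.1 h1', lt_of_le_of_lt h2' hy.2⟩
      · exact ⟨lt_of_lt_of_le hy.1 h1', lt_of_le_of_lt h2' hx.2⟩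
    have h0 : (0:ℝ) ∈ uIcc (deriv f x) (deriv f y) := by
      rw [mem_uIcc]
      left
      exact ⟨hxneg.le, hypos.le⟩
    obtain ⟨z, hz, hz0⟩ := intermediate_value_uIcc (hderiv1.continuousOn.mono hsub) h0
    exact hne z (Ioo_subset_Icc_self (hsub hz)) hz0
  have hsign : (∀ x ∈ Ioo a b, 0 < deriv f x) ∨ (∀ x ∈ Ioo a b, deriv f x < 0) := by
    rcases lt_or_gt_of_ne (hne _ (Ioo_subset_Icc_self hx₀)) with h | h
    · right
      intro x hx
      rcases lt_or_gt_of_ne (hne x (Ioo_subset_Icc_self hx)) with h' | h'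
      · exact h'
      · exact absurd (hsame _ hx₀ x hx h h') (fun hh => hh)
    · left
      intro x hx
      rcases lt_or_gt_of_ne (hne x (Ioo_subset_Icc_self hx)) with h' | h'
      · exact absurd (hsame x hx _ hx₀ h' h) (fun hh => hh)
      · exact h'
  rcases hsign with hpos | hneg
  · -- increasing case
    have hmono : StrictMonoOn f (Icc a b) :=
      strictMonoOn_of_deriv_pos (convex_Icc a b) hf.continuousOn
        (fun x hx => hpos x (by rwa [interior_Icc] at hx))
    have hjinf' : jinf = f a := by
      rw [hjinf]
      apply IsLeast.csInf_eq
      refine ⟨⟨a, haI, rfl⟩, ?_⟩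
      rintro y ⟨z, hz, rfl⟩
      exact hmono.monotoneOn haI hz hz.1
    have hjsup' : jsup = f b := by
      rw [hjsup]
      apply IsGreatest.csSup_eq
      refine ⟨⟨b, hbI, rfl⟩, ?_⟩
      rintro y ⟨z, hz, rfl⟩
      exact hmono.monotoneOn hz hbI hz.2
    rw [hjinf', hjsup']
    exact uniform_stretch_core a b hab f hf k ε hk hε m M hmpt hMpt h1 h2 hpos
  · -- decreasing case
    have hgc : ContDiffOn ℝ 2 (fun x => -f x) (Icc a b) := hf.neg
    have hdg : ∀ x, deriv (fun y => -f y) x = -deriv f x := fun x => deriv.neg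
    have hdg2 : ∀ x, deriv (deriv (fun y => -f y)) x = -deriv (deriv f) x := by
      intro x
      have h : deriv (fun y => -f y) = fun y => -deriv f y := funext hdg
      rw [h]
      exact deriv.neg
    obtain ⟨hA, hB⟩ := uniform_stretch_core a b hab (fun x => -f x) hgc k ε hk hε m M
      (fun x hx => by rw [hdg, abs_neg]; exact hmpt x hx)
      (fun x hx => by rw [hdg2, abs_neg]; exact hMpt x hx)
      h1 h2
      (fun x hx => by rw [hdg]; linarith [hneg x hx])
    have hanti : StrictAntiOn f (Icc a b) :=
      strictAntiOn_of_deriv_neg (convex_Icc a b) hf.continuousOn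
        (fun x hx => hneg x (by rwa [interior_Icc] at hx))
    have hjinf' : jinf = f b := by
      rw [hjinf]
      apply IsLeast.csInf_eq
      refine ⟨⟨b, hbI, rfl⟩, ?_⟩
      rintro y ⟨z, hz, rfl⟩
      exact hanti.antitoneOn hz hbI hz.2
    have hjsup' : jsup = f a := by
      rw [hjsup]
      apply IsGreatest.csSup_eq
      refine ⟨⟨a, haI, rfl⟩, ?_⟩
      rintro y ⟨z, hz, rfl⟩
      exact hanti.antitoneOn haI hz hz.1
    rw [hjinf', hjsup']
    constructor
    · linarith [hA]
    · intro c d hc hcd hd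
      have hB' := hB (-d) (-c) (by simpa using hd) (by linarith) (by simpa using hc)
      have hsetg : Icc a b ∩ (fun x => -f x) ⁻¹' Icc (-d) (-c) = Icc a b ∩ f ⁻¹' Icc c d := by
        ext x
        simp only [mem_inter_iff, mem_preimage, mem_Icc]
        constructor
        · rintro ⟨h1', h2', h3'⟩
          exact ⟨h1', by linarith, by linarith⟩
        · rintro ⟨h1', h2', h3'⟩
          exact ⟨h1', by linarith, by linarith⟩
      rw [hsetg] at hB'
      have e : -c - -d = d - c := by ring
      have e2 : -f b - -f a = f a - f b := by ring
      rw [e, e2] at hB'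
      exact hB'
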